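/- Let π be a log-concave positive pmf on {0,...,n} (π_i² ≥ π_{i−1}π_{i+1} for 0 < i < n). Define the kernel K_π with death, hold, birth probabilities q_i = π_{i−1}/(π_{i−1}+π_i), r_i = (π_i² − π_{i−1}π_{i+1})/((π_{i−1}+π_i)(π_i+π_{i+1})), p_i = π_{i+1}/(π_i+π_{i+1}) (with π_{−1} = π_{n+1} = 0). Then K_π is a stochastically monotone birth-and-death Markov kernel reversible with stationary distribution π, and K_π ⪯ K for every stochastically monotone birth-and-death kernel K with stationary distribution π. -/

import Mathlib

open Finset

/-- The fastest-mixing kernel `K_π` for a pmf `π` on `{0,...,n}`: death, hold, birth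
probabilities `q_i = π_{i-1}/(π_{i-1}+π_i)`, `r_i = (π_i² - π_{i-1}π_{i+1})/((π_{i-1}+π_i)(π_i+π_{i+1}))`,
`p_i = π_{i+1}/(π_i+π_{i+1})`, with the conventions `π_{-1} = π_{n+1} = 0`.
(Here `pe k` stands for `π_{k-1}`, extended by zero.) -/
noncomputable def Kpi (n : ℕ) (π : ℕ → ℝ) : Matrix (Fin (n + 1)) (Fin (n + 1)) ℝ :=
  Matrix.of fun i j =>
    let pe : ℕ → ℝ := fun k => if 1 ≤ k ∧ k ≤ n + 1 then π (k - 1) else 0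
    if (j : ℕ) = (i : ℕ) + 1 then pe ((i : ℕ) + 2) / (pe ((i : ℕ) + 1) + pe ((i : ℕ) + 2))
    else if (i : ℕ) = (j : ℕ) + 1 then pe (i : ℕ) / (pe (i : ℕ) + pe ((i : ℕ) + 1))
    else if i = j then
      (pe ((i : ℕ) + 1) ^ 2 - pe (i : ℕ) * pe ((i : ℕ) + 2)) /
        ((pe (i : ℕ) + pe ((i : ℕ) + 1)) * (pe ((i : ℕ) + 1) + pe ((i : ℕ) + 2)))
    else 0

namespace Stmt15Aux

noncomputable def pe (n : ℕ) (π : ℕ → ℝ) : ℕ → ℝ :=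
  fun k => if 1 ≤ k ∧ k ≤ n + 1 then π (k - 1) else 0

variable {n : ℕ} {π : ℕ → ℝ}

lemma Kpi_apply (n : ℕ) (π : ℕ → ℝ) (i j : Fin (n + 1)) :
    Kpi n π i j =
      if (j : ℕ) = (i : ℕ) + 1 then pe n π ((i : ℕ) + 2) / (pe n π ((i : ℕ) + 1) + pe n π ((i : ℕ) + 2))
      else if (i : ℕ) = (j : ℕ) + 1 then pe n π (i : ℕ) / (pe n π (i : ℕ) + pe n π ((i : ℕ) + 1))
      else if i = j then
        (pe n π ((i : ℕ) + 1) ^ 2 - pe n π (i : ℕ) * pe n π ((i : ℕ) + 2)) /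
          ((pe n π (i : ℕ) + pe n π ((i : ℕ) + 1)) * (pe n π ((i : ℕ) + 1) + pe n π ((i : ℕ) + 2)))
      else 0 := rfl

lemma pe_nonneg (hπpos : ∀ i, i ≤ n → 0 < π i) (k : ℕ) : 0 ≤ pe n π k := by
  unfold pe; split
  · exact (hπpos _ (by omega)).le
  · exact le_rfl

lemma pe_succ (k : ℕ) (hk : k ≤ n) : pe n π (k + 1) = π k := by
  unfold pe; rw [if_pos ⟨by omega, by omega⟩]; norm_num

lemma pe_pos (hπpos : ∀ i, i ≤ n → 0 < π i) (k : ℕ) (hk : k ≤ n) : 0 < pe n π (k + 1) := by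
  rw [pe_succ k hk]; exact hπpos k hk

lemma pe_zero' (k : ℕ) (h : k = 0 ∨ n + 1 < k) : pe n π k = 0 := by
  unfold pe; rw [if_neg (by omega)]

lemma denA_pos (hπpos : ∀ i, i ≤ n → 0 < π i) (i : Fin (n + 1)) :
    0 < pe n π (i : ℕ) + pe n π ((i : ℕ) + 1) :=
  add_pos_of_nonneg_of_pos (pe_nonneg hπpos _) (pe_pos hπpos _ i.is_le)

lemma denB_pos (hπpos : ∀ i, i ≤ n → 0 < π i) (i : Fin (n + 1)) :
    0 < pe n π ((i : ℕ) + 1) + pe n π ((i : ℕ) + 2) :=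
  add_pos_of_pos_of_nonneg (pe_pos hπpos _ i.is_le) (pe_nonneg hπpos _)

lemma num_nonneg (hπpos : ∀ i, i ≤ n → 0 < π i)
    (hlc : ∀ i, 1 ≤ i → i < n → π (i - 1) * π (i + 1) ≤ π i ^ 2) (i : Fin (n + 1)) :
    0 ≤ pe n π ((i : ℕ) + 1) ^ 2 - pe n π (i : ℕ) * pe n π ((i : ℕ) + 2) := by
  rcases eq_or_ne (i : ℕ) 0 with h0 | h0
  · rw [h0, pe_zero' 0 (Or.inl rfl)]
    simpa using sq_nonneg (pe n π 1)
  · rcases eq_or_ne (i : ℕ) n with hn | hn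
    · rw [hn, pe_zero' (n + 2) (Or.inr (by omega))]
      simpa using sq_nonneg (pe n π (n + 1))
    · have hi1 : 1 ≤ (i : ℕ) := by omega
      have hin : (i : ℕ) < n := by have := i.is_le; omega
      have e1 := pe_succ (n := n) (π := π) ((i : ℕ) - 1) (by omega)
      rw [show ((i : ℕ) - 1) + 1 = (i : ℕ) by omega] at e1
      have eb : pe n π ((i : ℕ) + 1) = π (i : ℕ) := pe_succ _ i.is_le
      have ec : pe n π ((i : ℕ) + 2) = π ((i : ℕ) + 1) := by
        rw [show (i : ℕ) + 2 = ((i : ℕ) + 1) + 1 by omega]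
        exact pe_succ _ (by omega)
      rw [e1, eb, ec]
      have := hlc (i : ℕ) hi1 hin
      linarith


lemma Kpi_tridiag (i j : Fin (n + 1)) (h : (i : ℕ) + 1 < (j : ℕ) ∨ (j : ℕ) + 1 < (i : ℕ)) :
    Kpi n π i j = 0 := by
  rw [Kpi_apply, if_neg (by omega), if_neg (by omega), if_neg (by
    intro he; rw [he] at h; omega)]

lemma Kpi_nonneg (hπpos : ∀ i, i ≤ n → 0 < π i)
    (hlc : ∀ i, 1 ≤ i → i < n → π (i - 1) * π (i + 1) ≤ π i ^ 2) (i j : Fin (n + 1)) :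
    0 ≤ Kpi n π i j := by
  rw [Kpi_apply]
  split_ifs with h1 h2 h3
  · exact div_nonneg (pe_nonneg hπpos _) (denB_pos hπpos i).le
  · exact div_nonneg (pe_nonneg hπpos _) (denA_pos hπpos i).le
  · exact div_nonneg (num_nonneg hπpos hlc i) (mul_nonneg (denA_pos hπpos i).le (denB_pos hπpos i).le)
  · exact le_rfl

lemma Kpi_rowsum (hπpos : ∀ i, i ≤ n → 0 < π i) (i : Fin (n + 1)) :
    ∑ j, Kpi n π i j = 1 := by
  have hdecomp : ∀ j : Fin (n + 1), Kpi n π i j =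
      (if (j : ℕ) = (i : ℕ) + 1 then
          pe n π ((i : ℕ) + 2) / (pe n π ((i : ℕ) + 1) + pe n π ((i : ℕ) + 2)) else 0) +
      ((if (i : ℕ) = (j : ℕ) + 1 then
          pe n π (i : ℕ) / (pe n π (i : ℕ) + pe n π ((i : ℕ) + 1)) else 0) +
      (if i = j then
          (pe n π ((i : ℕ) + 1) ^ 2 - pe n π (i : ℕ) * pe n π ((i : ℕ) + 2)) /
            ((pe n π (i : ℕ) + pe n π ((i : ℕ) + 1)) * (pe n π ((i : ℕ) + 1) + pe n π ((i : ℕ) + 2)))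
        else 0)) := by
    intro j
    rw [Kpi_apply]
    split_ifs with h1 h2 h3 <;> first | ring1 | (exfalso; rw [Fin.ext_iff] at *; omega)
  rw [Finset.sum_congr rfl fun j _ => hdecomp j, Finset.sum_add_distrib, Finset.sum_add_distrib]
  have hS3 : ∑ j : Fin (n + 1), (if i = j then
      (pe n π ((i : ℕ) + 1) ^ 2 - pe n π (i : ℕ) * pe n π ((i : ℕ) + 2)) /
        ((pe n π (i : ℕ) + pe n π ((i : ℕ) + 1)) * (pe n π ((i : ℕ) + 1) + pe n π ((i : ℕ) + 2)))
      else 0) =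
      (pe n π ((i : ℕ) + 1) ^ 2 - pe n π (i : ℕ) * pe n π ((i : ℕ) + 2)) /
        ((pe n π (i : ℕ) + pe n π ((i : ℕ) + 1)) * (pe n π ((i : ℕ) + 1) + pe n π ((i : ℕ) + 2))) := by
    rw [Finset.sum_ite_eq]
    simp
  have hS1 : ∑ j : Fin (n + 1), (if (j : ℕ) = (i : ℕ) + 1 then
      pe n π ((i : ℕ) + 2) / (pe n π ((i : ℕ) + 1) + pe n π ((i : ℕ) + 2)) else 0) =
      pe n π ((i : ℕ) + 2) / (pe n π ((i : ℕ) + 1) + pe n π ((i : ℕ) + 2)) := by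
    by_cases hi : (i : ℕ) < n
    · have hcg := Finset.sum_congr rfl fun (j : Fin (n + 1)) (_ : j ∈ univ) => if_congr
        (show ((j : ℕ) = (i : ℕ) + 1) ↔ (j = (⟨(i : ℕ) + 1, by omega⟩ : Fin (n + 1))) by
          rw [Fin.ext_iff])
        (rfl : pe n π ((i : ℕ) + 2) / (pe n π ((i : ℕ) + 1) + pe n π ((i : ℕ) + 2)) = _)
        (rfl : (0 : ℝ) = 0)
      rw [hcg, Finset.sum_ite_eq']
      simp
    · rw [Finset.sum_eq_zero fun j _ => by rw [if_neg (by have := j.is_le; omega)]]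
      rw [pe_zero' ((i : ℕ) + 2) (Or.inr (by have := i.is_le; omega)), zero_div]
  have hS2 : ∑ j : Fin (n + 1), (if (i : ℕ) = (j : ℕ) + 1 then
      pe n π (i : ℕ) / (pe n π (i : ℕ) + pe n π ((i : ℕ) + 1)) else 0) =
      pe n π (i : ℕ) / (pe n π (i : ℕ) + pe n π ((i : ℕ) + 1)) := by
    by_cases hi : 1 ≤ (i : ℕ)
    · have hcg := Finset.sum_congr rfl fun (j : Fin (n + 1)) (_ : j ∈ univ) => if_congr
        (show ((i : ℕ) = (j : ℕ) + 1) ↔ (j = (⟨(i : ℕ) - 1, by omega⟩ : Fin (n + 1))) by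
          rw [Fin.ext_iff]; simp only [Fin.val_mk]; omega)
        (rfl : pe n π (i : ℕ) / (pe n π (i : ℕ) + pe n π ((i : ℕ) + 1)) = _)
        (rfl : (0 : ℝ) = 0)
      rw [hcg, Finset.sum_ite_eq']
      simp
    · rw [Finset.sum_eq_zero fun j _ => by rw [if_neg (by omega)]]
      rw [pe_zero' (i : ℕ) (Or.inl (by omega)), zero_div]
  rw [hS1, hS2, hS3]
  have hab : pe n π (i : ℕ) + pe n π ((i : ℕ) + 1) ≠ 0 := (denA_pos hπpos i).ne'
  have hbc : pe n π ((i : ℕ) + 1) + pe n π ((i : ℕ) + 2) ≠ 0 := (denB_pos hπpos i).ne'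
  field_simp
  ring


lemma Kpi_p (l : Fin (n + 1)) (hl : (l : ℕ) < n) :
    Kpi n π l ⟨(l : ℕ) + 1, by omega⟩ = π ((l : ℕ) + 1) / (π (l : ℕ) + π ((l : ℕ) + 1)) := by
  have eb : pe n π ((l : ℕ) + 1) = π (l : ℕ) := pe_succ _ l.is_le
  have ec : pe n π ((l : ℕ) + 2) = π ((l : ℕ) + 1) := by
    rw [show (l : ℕ) + 2 = ((l : ℕ) + 1) + 1 by omega]; exact pe_succ _ (by omega)
  rw [Kpi_apply, if_pos rfl, eb, ec]

lemma Kpi_q (l : Fin (n + 1)) (hl : (l : ℕ) < n) :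
    Kpi n π ⟨(l : ℕ) + 1, by omega⟩ l = π (l : ℕ) / (π (l : ℕ) + π ((l : ℕ) + 1)) := by
  have eb : pe n π ((l : ℕ) + 1) = π (l : ℕ) := pe_succ _ l.is_le
  have ec : pe n π ((l : ℕ) + 2) = π ((l : ℕ) + 1) := by
    rw [show (l : ℕ) + 2 = ((l : ℕ) + 1) + 1 by omega]; exact pe_succ _ (by omega)
  rw [Kpi_apply, if_neg (by simp only [Fin.val_mk]; omega), if_pos rfl]
  simp only [Fin.val_mk]
  rw [eb, ec]

lemma Kpi_rev (i j : Fin (n + 1)) :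
    π (i : ℕ) * Kpi n π i j = π (j : ℕ) * Kpi n π j i := by
  have hcase : ∀ i j : Fin (n + 1), (j : ℕ) = (i : ℕ) + 1 →
      π (i : ℕ) * Kpi n π i j = π (j : ℕ) * Kpi n π j i := by
    intro i j h
    have hl : (i : ℕ) < n := by have := j.is_le; omega
    have hj : j = ⟨(i : ℕ) + 1, by omega⟩ := Fin.ext (by simp only [Fin.val_mk]; omega)
    rw [hj]
    show π (i : ℕ) * _ = π ((i : ℕ) + 1) * _
    rw [Kpi_p i hl, Kpi_q i hl]
    ring
  rcases lt_trichotomy (i : ℕ) (j : ℕ) with h | h | h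
  · rcases eq_or_ne ((j : ℕ)) ((i : ℕ) + 1) with he | hne
    · exact hcase i j he
    · rw [Kpi_tridiag i j (Or.inl (by omega)), Kpi_tridiag j i (Or.inr (by omega)),
        mul_zero, mul_zero]
  · have : i = j := Fin.ext h
    rw [this]
  · rcases eq_or_ne ((i : ℕ)) ((j : ℕ) + 1) with he | hne
    · exact (hcase j i he).symm
    · rw [Kpi_tridiag i j (Or.inr (by omega)), Kpi_tridiag j i (Or.inl (by omega)),
        mul_zero, mul_zero]

lemma Kpi_stat (hπpos : ∀ i, i ≤ n → 0 < π i) (j : Fin (n + 1)) :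
    ∑ i : Fin (n + 1), π (i : ℕ) * Kpi n π i j = π (j : ℕ) := by
  rw [Finset.sum_congr rfl fun i _ => Kpi_rev i j, ← Finset.mul_sum, Kpi_rowsum hπpos j, mul_one]

/-! ### Generic lemmas for tridiagonal Markov kernels -/

variable (K : Matrix (Fin (n + 1)) (Fin (n + 1)) ℝ)

lemma row_lt (hrow : ∀ i, ∑ j, K i j = 1)
    (htri : ∀ i j : Fin (n + 1), ((i : ℕ) + 1 < (j : ℕ) ∨ (j : ℕ) + 1 < (i : ℕ)) → K i j = 0)
    {j l : Fin (n + 1)} (h : (j : ℕ) < (l : ℕ)) : ∑ i ∈ Iic l, K j i = 1 := by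
  rw [Finset.sum_subset (Finset.subset_univ (Iic l)) (fun i _ hi => htri j i (Or.inl (by
    rw [Finset.mem_Iic, Fin.le_def] at hi; omega)))]
  exact hrow j

lemma row_top (hrow : ∀ i, ∑ j, K i j = 1)
    {j l : Fin (n + 1)} (hl : (l : ℕ) = n) : ∑ i ∈ Iic l, K j i = 1 := by
  have : Iic l = univ := by
    ext x; simp only [Finset.mem_Iic, Finset.mem_univ, iff_true, Fin.le_def]
    have := x.is_le; omega
  rw [this]; exact hrow j

lemma row_eq (hrow : ∀ i, ∑ j, K i j = 1)
    (htri : ∀ i j : Fin (n + 1), ((i : ℕ) + 1 < (j : ℕ) ∨ (j : ℕ) + 1 < (i : ℕ)) → K i j = 0)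
    {l : Fin (n + 1)} (hl : (l : ℕ) < n) :
    ∑ i ∈ Iic l, K l i = 1 - K l ⟨(l : ℕ) + 1, by omega⟩ := by
  have hsd := Finset.sum_sdiff (f := fun i => K l i) (Finset.subset_univ (Iic l))
  have h2 : ∑ i ∈ univ \ Iic l, K l i = K l ⟨(l : ℕ) + 1, by omega⟩ := by
    apply Finset.sum_eq_single_of_mem
    · rw [Finset.mem_sdiff]
      exact ⟨Finset.mem_univ _, by rw [Finset.mem_Iic, Fin.le_def]; simp only [Fin.val_mk]; omega⟩
    · intro i hi hne
      apply htri; left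
      rw [Finset.mem_sdiff, Finset.mem_Iic, Fin.le_def] at hi
      simp only [ne_eq, Fin.ext_iff, Fin.val_mk] at hne
      omega
  rw [hrow l] at hsd
  linarith

lemma row_succ
    (htri : ∀ i j : Fin (n + 1), ((i : ℕ) + 1 < (j : ℕ) ∨ (j : ℕ) + 1 < (i : ℕ)) → K i j = 0)
    {l : Fin (n + 1)} (hl : (l : ℕ) < n) :
    ∑ i ∈ Iic l, K ⟨(l : ℕ) + 1, by omega⟩ i = K ⟨(l : ℕ) + 1, by omega⟩ l := by
  apply Finset.sum_eq_single_of_mem l (Finset.mem_Iic.2 le_rfl)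
  intro i hi hne
  apply htri; right
  rw [Finset.mem_Iic, Fin.le_def] at hi
  simp only [ne_eq, Fin.ext_iff] at hne
  simp only [Fin.val_mk]
  omega

lemma row_far
    (htri : ∀ i j : Fin (n + 1), ((i : ℕ) + 1 < (j : ℕ) ∨ (j : ℕ) + 1 < (i : ℕ)) → K i j = 0)
    {j l : Fin (n + 1)} (h : (l : ℕ) + 1 < (j : ℕ)) : ∑ i ∈ Iic l, K j i = 0 :=
  Finset.sum_eq_zero fun i hi => htri j i (Or.inr (by
    rw [Finset.mem_Iic, Fin.le_def] at hi; omega))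

lemma Iio_succ' {l : Fin (n + 1)} (hl : (l : ℕ) < n) :
    Iio (⟨(l : ℕ) + 1, by omega⟩ : Fin (n + 1)) = Iic l := by
  ext x
  simp only [Finset.mem_Iio, Finset.mem_Iic, Fin.lt_def, Fin.le_def, Fin.val_mk]
  omega

lemma sum_diag (hrow : ∀ i, ∑ j, K i j = 1)
    (htri : ∀ i j : Fin (n + 1), ((i : ℕ) + 1 < (j : ℕ) ∨ (j : ℕ) + 1 < (i : ℕ)) → K i j = 0)
    {l : Fin (n + 1)} (hl : (l : ℕ) < n) :
    ∑ j ∈ Iic l, π (j : ℕ) * ∑ i ∈ Iic l, K j i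
      = (∑ j ∈ Iic l, π (j : ℕ)) - π (l : ℕ) * K l ⟨(l : ℕ) + 1, by omega⟩ := by
  have hcg : ∑ j ∈ Iio l, π (j : ℕ) * ∑ i ∈ Iic l, K j i = ∑ j ∈ Iio l, π (j : ℕ) :=
    Finset.sum_congr rfl fun j hj => by
      rw [row_lt K hrow htri (by rw [Finset.mem_Iio, Fin.lt_def] at hj; exact hj), mul_one]
  rw [← Finset.sum_erase_add (Iic l) _ (Finset.mem_Iic.2 (le_refl l)), Finset.Iic_erase, hcg,
      row_eq K hrow htri hl,
      ← Finset.sum_erase_add (Iic l) (fun j => π (j : ℕ)) (Finset.mem_Iic.2 (le_refl l)),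
      Finset.Iic_erase]
  ring

lemma sum_rows (hrow : ∀ i, ∑ j, K i j = 1)
    (htri : ∀ i j : Fin (n + 1), ((i : ℕ) + 1 < (j : ℕ) ∨ (j : ℕ) + 1 < (i : ℕ)) → K i j = 0)
    {l : Fin (n + 1)} (hl : (l : ℕ) < n) (s : Finset (Fin (n + 1)))
    (hs : Iic (⟨(l : ℕ) + 1, by omega⟩ : Fin (n + 1)) ⊆ s) :
    ∑ j ∈ s, π (j : ℕ) * ∑ i ∈ Iic l, K j i
      = (∑ j ∈ Iic l, π (j : ℕ)) - π (l : ℕ) * K l ⟨(l : ℕ) + 1, by omega⟩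
          + π ((l : ℕ) + 1) * K ⟨(l : ℕ) + 1, by omega⟩ l := by
  have hvan : ∀ j ∈ s, j ∉ Iic (⟨(l : ℕ) + 1, by omega⟩ : Fin (n + 1)) →
      π (j : ℕ) * ∑ i ∈ Iic l, K j i = 0 := by
    intro j _ hj
    rw [Finset.mem_Iic, Fin.le_def] at hj
    simp only [Fin.val_mk] at hj
    rw [row_far K htri (by omega), mul_zero]
  rw [← Finset.sum_subset hs hvan]
  have e1 : Iic (⟨(l : ℕ) + 1, by omega⟩ : Fin (n + 1))
      = insert (⟨(l : ℕ) + 1, by omega⟩ : Fin (n + 1)) (Iic l) := by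
    rw [← Iio_succ' hl, Finset.Iio_insert]
  rw [e1, Finset.sum_insert (by rw [Finset.mem_Iic, Fin.le_def]; simp only [Fin.val_mk]; omega)]
  rw [row_succ K htri hl, sum_diag (π := π) K hrow htri hl]
  show π ((l : ℕ) + 1) * _ + _ = _
  ring

lemma balance (hrow : ∀ i, ∑ j, K i j = 1)
    (htri : ∀ i j : Fin (n + 1), ((i : ℕ) + 1 < (j : ℕ) ∨ (j : ℕ) + 1 < (i : ℕ)) → K i j = 0)
    (hst : ∀ j : Fin (n + 1), ∑ i : Fin (n + 1), π (i : ℕ) * K i j = π (j : ℕ))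
    {l : Fin (n + 1)} (hl : (l : ℕ) < n) :
    π (l : ℕ) * K l ⟨(l : ℕ) + 1, by omega⟩ = π ((l : ℕ) + 1) * K ⟨(l : ℕ) + 1, by omega⟩ l := by
  have h1 := sum_rows (π := π) K hrow htri hl univ (Finset.subset_univ _)
  have h2 : ∑ j : Fin (n + 1), π (j : ℕ) * ∑ i ∈ Iic l, K j i = ∑ i ∈ Iic l, π (i : ℕ) := by
    rw [Finset.sum_congr rfl fun (j : Fin (n + 1)) _ => Finset.mul_sum (Iic l) (fun i => K j i) (π (j : ℕ))]
    rw [Finset.sum_comm]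
    exact Finset.sum_congr rfl fun i _ => hst i
  rw [h2] at h1
  linarith


lemma indicator_nonneg (D : Finset (Fin (n + 1))) (x : Fin (n + 1)) :
    (0 : ℝ) ≤ if x ∈ D then 1 else 0 := by split <;> norm_num

lemma indicator_antitone {D : Finset (Fin (n + 1))} (hD : IsLowerSet (D : Set (Fin (n + 1)))) :
    Antitone (fun x : Fin (n + 1) => if x ∈ D then (1 : ℝ) else 0) := by
  intro x y hxy
  by_cases hy : y ∈ D
  · have hx : x ∈ D := hD hxy hy
    simp [hx, hy]
  · simp only [if_neg hy]
    exact indicator_nonneg D x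

lemma mulVec_indicator (D : Finset (Fin (n + 1))) (j : Fin (n + 1)) :
    (K.mulVec fun x => if x ∈ D then (1 : ℝ) else 0) j = ∑ i ∈ D, K j i := by
  simp [Matrix.mulVec, dotProduct, mul_ite, mul_one, mul_zero, Finset.sum_ite_mem,
    Finset.univ_inter]

lemma lower_Iic {l : Fin (n + 1)} : IsLowerSet ((Iic l : Finset (Fin (n + 1))) : Set (Fin (n + 1))) := by
  intro x y hxy hx
  simp only [Finset.coe_Iic, Set.mem_Iic] at *
  exact le_trans hxy hx

lemma mono_pq (hrow : ∀ i, ∑ j, K i j = 1)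
    (htri : ∀ i j : Fin (n + 1), ((i : ℕ) + 1 < (j : ℕ) ∨ (j : ℕ) + 1 < (i : ℕ)) → K i j = 0)
    (hmono : ∀ f : Fin (n + 1) → ℝ, (∀ i, 0 ≤ f i) → Antitone f → Antitone (K.mulVec f))
    {l : Fin (n + 1)} (hl : (l : ℕ) < n) :
    K l ⟨(l : ℕ) + 1, by omega⟩ + K ⟨(l : ℕ) + 1, by omega⟩ l ≤ 1 := by
  have hm := hmono _ (indicator_nonneg (Iic l))
    (indicator_antitone (by exact lower_Iic))
    (show l ≤ ⟨(l : ℕ) + 1, by omega⟩ by rw [Fin.le_def]; simp only [Fin.val_mk]; omega)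
  rw [mulVec_indicator, mulVec_indicator, row_eq K hrow htri hl, row_succ K htri hl] at hm
  linarith

lemma antitone_of_succ (g : Fin (n + 1) → ℝ)
    (h : ∀ k : ℕ, (hk : k < n) → g ⟨k + 1, by omega⟩ ≤ g ⟨k, by omega⟩) : Antitone g := by
  have key : ∀ d (i : Fin (n + 1)), (hd : (i : ℕ) + d ≤ n) → g ⟨(i : ℕ) + d, by omega⟩ ≤ g i := by
    intro d
    induction d with
    | zero =>
      intro i hd
      exact le_of_eq (congrArg g (Fin.ext rfl))
    | succ d ih =>
      intro i hd
      calc g ⟨(i : ℕ) + (d + 1), by omega⟩ = g ⟨((i : ℕ) + d) + 1, by omega⟩ :=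
            congrArg g (Fin.ext (by simp only [Fin.val_mk]; omega))
        _ ≤ g ⟨(i : ℕ) + d, by omega⟩ := h ((i : ℕ) + d) (by omega)
        _ ≤ g i := ih i (by omega)
  intro i j hij
  rw [Fin.le_def] at hij
  have hj : j = ⟨(i : ℕ) + ((j : ℕ) - (i : ℕ)), by have := j.is_le; omega⟩ :=
    Fin.ext (by simp only [Fin.val_mk]; omega)
  rw [hj]
  exact key _ i (by have := j.is_le; omega)

lemma mono_of_pq (hK0 : ∀ i j, 0 ≤ K i j) (hrow : ∀ i, ∑ j, K i j = 1)
    (htri : ∀ i j : Fin (n + 1), ((i : ℕ) + 1 < (j : ℕ) ∨ (j : ℕ) + 1 < (i : ℕ)) → K i j = 0)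
    (hpq : ∀ (k : ℕ) (hk : k < n),
      K ⟨k, by omega⟩ ⟨k + 1, by omega⟩ + K ⟨k + 1, by omega⟩ ⟨k, by omega⟩ ≤ 1)
    (f : Fin (n + 1) → ℝ) (hf0 : ∀ i, 0 ≤ f i) (hfa : Antitone f) :
    Antitone (K.mulVec f) := by
  apply antitone_of_succ
  intro k hk
  set i : Fin (n + 1) := ⟨k, by omega⟩ with hi
  set i1 : Fin (n + 1) := ⟨k + 1, by omega⟩ with hi1
  have hii1 : i ≤ i1 := by rw [Fin.le_def]; simp [hi, hi1]
  have hΔ : f i1 ≤ f i := hfa hii1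
  -- lower bound for row i
  have hlow : ∑ j, K i j * (if j = i1 then f i1 else f i) ≤ ∑ j, K i j * f j := by
    apply Finset.sum_le_sum
    intro j _
    by_cases hz : K i j = 0
    · rw [hz, zero_mul, zero_mul]
    · have hjv : (j : ℕ) ≤ k + 1 := by
        by_contra hc
        exact hz (htri i j (Or.inl (by simp only [hi, Fin.val_mk]; omega)))
      apply mul_le_mul_of_nonneg_left _ (hK0 i j)
      by_cases hj : j = i1
      · rw [if_pos hj, hj]
      · rw [if_neg hj]
        apply hfa
        rw [Fin.le_def]
        simp only [ne_eq, Fin.ext_iff, hi1, Fin.val_mk] at hj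
        simp only [hi, Fin.val_mk]
        omega
  -- upper bound for row i1
  have hupp : ∑ j, K i1 j * f j ≤ ∑ j, K i1 j * (if j = i then f i else f i1) := by
    apply Finset.sum_le_sum
    intro j _
    by_cases hz : K i1 j = 0
    · rw [hz, zero_mul, zero_mul]
    · have hjv : k ≤ (j : ℕ) := by
        by_contra hc
        exact hz (htri i1 j (Or.inr (by simp only [hi1, Fin.val_mk]; omega)))
      apply mul_le_mul_of_nonneg_left _ (hK0 i1 j)
      by_cases hj : j = i
      · rw [if_pos hj, hj]
      · rw [if_neg hj]
        apply hfa
        rw [Fin.le_def]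
        simp only [ne_eq, Fin.ext_iff, hi, Fin.val_mk] at hj
        simp only [hi1, Fin.val_mk]
        omega
  have hsum1 : ∑ j, K i j * (if j = i1 then f i1 else f i) = f i + K i i1 * (f i1 - f i) := by
    have hpt : ∀ j : Fin (n + 1), K i j * (if j = i1 then f i1 else f i)
        = K i j * f i + (if j = i1 then K i j * (f i1 - f i) else 0) := by
      intro j; split_ifs <;> ring
    rw [Finset.sum_congr rfl fun j _ => hpt j, Finset.sum_add_distrib, ← Finset.sum_mul,
      hrow i, one_mul, Finset.sum_ite_eq']
    simp
  have hsum2 : ∑ j, K i1 j * (if j = i then f i else f i1) = f i1 + K i1 i * (f i - f i1) := by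
    have hpt : ∀ j : Fin (n + 1), K i1 j * (if j = i then f i else f i1)
        = K i1 j * f i1 + (if j = i then K i1 j * (f i - f i1) else 0) := by
      intro j; split_ifs <;> ring
    rw [Finset.sum_congr rfl fun j _ => hpt j, Finset.sum_add_distrib, ← Finset.sum_mul,
      hrow i1, one_mul, Finset.sum_ite_eq']
    simp
  have hPQ := hpq k hk
  have hP0 : 0 ≤ K i i1 := hK0 i i1
  have hQ0 : 0 ≤ K i1 i := hK0 i1 i
  show (K.mulVec f) i1 ≤ (K.mulVec f) i
  show ∑ j, K i1 j * f j ≤ ∑ j, K i j * f j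
  have h1 : ∑ j, K i1 j * f j ≤ f i1 + K i1 i * (f i - f i1) := le_trans hupp (le_of_eq hsum2)
  have h2 : f i + K i i1 * (f i1 - f i) ≤ ∑ j, K i j * f j := le_trans (le_of_eq hsum1.symm) hlow
  nlinarith [mul_nonneg (sub_nonneg.2 hPQ) (sub_nonneg.2 hΔ)]


lemma lower_char (D : Finset (Fin (n + 1))) (hD : IsLowerSet (D : Set (Fin (n + 1))))
    (hne : D.Nonempty) : D = Iic (D.max' hne) := by
  ext j
  simp only [Finset.mem_Iic]
  constructor
  · exact fun h => Finset.le_max' D j h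
  · intro h
    exact Finset.mem_coe.1 (hD h (Finset.mem_coe.2 (D.max'_mem hne)))

lemma scalar_le (hπpos : ∀ i, i ≤ n → 0 < π i) {l : Fin (n + 1)} (hl : (l : ℕ) < n) {p q : ℝ}
    (hq0 : 0 ≤ q) (hbal : π (l : ℕ) * p = π ((l : ℕ) + 1) * q) (hpq : p + q ≤ 1) :
    π (l : ℕ) * p ≤ π (l : ℕ) * (π ((l : ℕ) + 1) / (π (l : ℕ) + π ((l : ℕ) + 1))) := by
  have ha := hπpos (l : ℕ) (by omega)
  have hb := hπpos ((l : ℕ) + 1) (by omega)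
  have hden : 0 < π (l : ℕ) + π ((l : ℕ) + 1) := by linarith
  rw [← mul_div_assoc, le_div_iff₀ hden]
  have h2 : π (l : ℕ) * (π (l : ℕ) * p) = π (l : ℕ) * (π ((l : ℕ) + 1) * q) := by rw [hbal]
  have h3 : π (l : ℕ) * π ((l : ℕ) + 1) * (p + q) ≤ π (l : ℕ) * π ((l : ℕ) + 1) * 1 :=
    mul_le_mul_of_nonneg_left hpq (mul_nonneg ha.le hb.le)
  nlinarith [h2, h3]

lemma eval_eq (K : Matrix (Fin (n + 1)) (Fin (n + 1)) ℝ) (D E : Finset (Fin (n + 1))) :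
    ∑ j : Fin (n + 1), π (j : ℕ) *
        ((K.mulVec fun x => if x ∈ D then (1 : ℝ) else 0) j * (if j ∈ E then (1 : ℝ) else 0))
      = ∑ j ∈ E, π (j : ℕ) * ∑ i ∈ D, K j i := by
  rw [Finset.sum_congr rfl fun (j : Fin (n + 1)) (_ : j ∈ univ) => by
    rw [mulVec_indicator K D j]]
  have hpt : ∀ j : Fin (n + 1), π (j : ℕ) * ((∑ i ∈ D, K j i) * (if j ∈ E then (1 : ℝ) else 0))
      = if j ∈ E then π (j : ℕ) * ∑ i ∈ D, K j i else 0 := by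
    intro j; split_ifs <;> ring
  rw [Finset.sum_congr rfl fun j _ => hpt j, Finset.sum_ite_mem, Finset.univ_inter]

end Stmt15Aux

open Stmt15Aux

theorem stmt_15 {n : ℕ} (π : ℕ → ℝ)
    (hπpos : ∀ i, i ≤ n → 0 < π i)
    (hπ1 : ∑ i ∈ Finset.range (n + 1), π i = 1)
    (hlc : ∀ i, 1 ≤ i → i < n → π (i - 1) * π (i + 1) ≤ π i ^ 2) :
    -- `K_π` is a Markov kernel:
    (∀ i j, 0 ≤ Kpi n π i j) ∧ (∀ i, ∑ j, Kpi n π i j = 1) ∧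
    -- it is a birth-and-death (tridiagonal) kernel:
    (∀ i j : Fin (n + 1), ((i : ℕ) + 1 < (j : ℕ) ∨ (j : ℕ) + 1 < (i : ℕ)) → Kpi n π i j = 0) ∧
    -- it is reversible with stationary distribution π:
    (∀ i j : Fin (n + 1), π i * Kpi n π i j = π j * Kpi n π j i) ∧
    -- it is stochastically monotone:
    (∀ f : Fin (n + 1) → ℝ, (∀ i, 0 ≤ f i) → Antitone f → Antitone ((Kpi n π).mulVec f)) ∧
    -- and K_π ⪯ K for every stochastically monotone birth-and-death kernel K
    -- with stationary distribution π:
    (∀ K : Matrix (Fin (n + 1)) (Fin (n + 1)) ℝ,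
      (∀ i j, 0 ≤ K i j) → (∀ i, ∑ j, K i j = 1) →
      (∀ i j : Fin (n + 1), ((i : ℕ) + 1 < (j : ℕ) ∨ (j : ℕ) + 1 < (i : ℕ)) → K i j = 0) →
      (∀ j : Fin (n + 1), ∑ i : Fin (n + 1), π (i : ℕ) * K i j = π (j : ℕ)) →
      (∀ f : Fin (n + 1) → ℝ, (∀ i, 0 ≤ f i) → Antitone f → Antitone (K.mulVec f)) →
      ∀ D E : Finset (Fin (n + 1)), IsLowerSet (D : Set (Fin (n + 1))) →
        IsLowerSet (E : Set (Fin (n + 1))) →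
        ∑ j : Fin (n + 1), π (j : ℕ) *
            (((Kpi n π).mulVec fun x => if x ∈ D then (1 : ℝ) else 0) j *
              (if j ∈ E then (1 : ℝ) else 0)) ≤
        ∑ j : Fin (n + 1), π (j : ℕ) *
            ((K.mulVec fun x => if x ∈ D then (1 : ℝ) else 0) j *
              (if j ∈ E then (1 : ℝ) else 0))) := by
  have hπrow := Kpi_rowsum (π := π) hπpos
  have hπtri : ∀ i j : Fin (n + 1), ((i : ℕ) + 1 < (j : ℕ) ∨ (j : ℕ) + 1 < (i : ℕ)) →
      Kpi n π i j = 0 := fun i j h => Kpi_tridiag i j h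
  have hπ0 := Kpi_nonneg (π := π) hπpos hlc
  have hπst := Kpi_stat (π := π) hπpos
  have hπpq : ∀ (k : ℕ) (hk : k < n),
      Kpi n π ⟨k, by omega⟩ ⟨k + 1, by omega⟩ + Kpi n π ⟨k + 1, by omega⟩ ⟨k, by omega⟩ ≤ 1 := by
    intro k hk
    have h1 : Kpi n π ⟨k, by omega⟩ ⟨k + 1, by omega⟩ = π (k + 1) / (π k + π (k + 1)) :=
      Kpi_p (⟨k, by omega⟩ : Fin (n + 1)) hk
    have h2 : Kpi n π ⟨k + 1, by omega⟩ ⟨k, by omega⟩ = π k / (π k + π (k + 1)) :=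
      Kpi_q (⟨k, by omega⟩ : Fin (n + 1)) hk
    rw [h1, h2, ← add_div, add_comm (π (k + 1)) (π k), div_self]
    have := hπpos k (by omega)
    have := hπpos (k + 1) (by omega)
    linarith
  refine ⟨hπ0, hπrow, hπtri, fun i j => Kpi_rev i j, ?_, ?_⟩
  · intro f hf0 hfa
    exact mono_of_pq (Kpi n π) hπ0 hπrow hπtri hπpq f hf0 hfa
  · intro K hK0 hKrow hKtri hKst hKmono D E hD hE
    rcases D.eq_empty_or_nonempty with rfl | hDne
    · rw [eval_eq (Kpi n π) ∅ E, eval_eq K ∅ E]; simp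
    rcases E.eq_empty_or_nonempty with rfl | hEne
    · rw [eval_eq (Kpi n π) D ∅, eval_eq K D ∅]; simp
    obtain ⟨l, rfl⟩ : ∃ l, D = Iic l := ⟨_, lower_char D hD hDne⟩
    obtain ⟨m, rfl⟩ : ∃ m, E = Iic m := ⟨_, lower_char E hE hEne⟩
    rw [eval_eq (Kpi n π) (Iic l) (Iic m), eval_eq K (Iic l) (Iic m)]
    rcases lt_trichotomy (l : ℕ) (m : ℕ) with h | h | h
    · -- l < m : both sides equal
      have hln : (l : ℕ) < n := by have := m.is_le; omega
      have hsub : Iic (⟨(l : ℕ) + 1, by omega⟩ : Fin (n + 1)) ⊆ Iic m := by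
        intro x hx
        rw [Finset.mem_Iic, Fin.le_def] at hx ⊢
        simp only [Fin.val_mk] at hx
        omega
      rw [sum_rows (π := π) (Kpi n π) hπrow hπtri hln _ hsub,
          sum_rows (π := π) K hKrow hKtri hln _ hsub,
          balance (π := π) (Kpi n π) hπrow hπtri hπst hln,
          balance (π := π) K hKrow hKtri hKst hln]
      linarith
    · -- l = m
      have hlm : l = m := Fin.ext h
      subst hlm
      by_cases hln : (l : ℕ) < n
      · rw [sum_diag (π := π) (Kpi n π) hπrow hπtri hln, sum_diag (π := π) K hKrow hKtri hln]
        have hp := Kpi_p (π := π) l hln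
        have hbal := balance (π := π) K hKrow hKtri hKst hln
        have hpq := mono_pq K hKrow hKtri hKmono hln
        have hq0 := hK0 (⟨(l : ℕ) + 1, by omega⟩ : Fin (n + 1)) l
        have hsc := scalar_le hπpos hln hq0 hbal hpq
        rw [hp]
        linarith
      · have hln' : (l : ℕ) = n := by have := l.is_le; omega
        apply le_of_eq
        refine Finset.sum_congr rfl fun j hj => ?_
        rw [row_top (Kpi n π) hπrow hln', row_top K hKrow hln']
    · -- m < l
      apply le_of_eq
      refine Finset.sum_congr rfl fun j hj => ?_
      have hjl : (j : ℕ) < (l : ℕ) := by rw [Finset.mem_Iic, Fin.le_def] at hj; omega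
      rw [row_lt (Kpi n π) hπrow hπtri hjl, row_lt K hKrow hKtri hjl]
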